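/- In the tree-splitting kernel setting with depth N ≥ 1, let S ⊆ A_{<N} := {α : |α| < N} be a prefix-closed set of words, and define k_S(x,y) := ∑_{α∈S} ⟨D A_α Φ₀(x), D A_α Φ₀(y)⟩ and R_{N,S}(x) := ∑_{|α|=N} ‖A_α Φ₀(x)‖² + ∑_{α ∈ A_{<N}∖S} ‖D A_α Φ₀(x)‖². Then for all x ∈ X, k₀(x,x) − k_S(x,x) = R_{N,S}(x) ≥ 0, and for all x, y ∈ X, |k₀(x,y) − k_S(x,y)| ≤ (R_{N,S}(x) R_{N,S}(y))^{1/2}. -/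

import Mathlib

open ContinuousLinearMap

/-- The operator `A_α = A_{i_n} ⋯ A_{i_1}` attached to the word `α = i_1 ⋯ i_n`;
the word is encoded as the list `[i_n, …, i_1]` (most recently applied letter first),
so the parent `α⁻` (deleting the last letter `i_n`) is `List.tail`. -/
noncomputable def Aword {H : Type*} [NormedAddCommGroup H] [InnerProductSpace ℂ H]
    {d : ℕ} (A : Fin d → H →L[ℂ] H) : List (Fin d) → H →L[ℂ] H
  | [] => 1
  | i :: w => A i * Aword A w

lemma cs_finset {H : Type*} [NormedAddCommGroup H] [InnerProductSpace ℂ H]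
    {ι : Type*} [Fintype ι] (a b : ι → H) :
    ‖∑ i, (inner ℂ (a i) (b i) : ℂ)‖ ≤
      Real.sqrt (∑ i, ‖a i‖ ^ 2) * Real.sqrt (∑ i, ‖b i‖ ^ 2) := by
  let f : PiLp 2 (fun _ : ι => H) := WithLp.toLp 2 a
  let g : PiLp 2 (fun _ : ι => H) := WithLp.toLp 2 b
  have h1 : (inner ℂ f g : ℂ) = ∑ i, (inner ℂ (a i) (b i) : ℂ) := PiLp.inner_apply f g
  have h2 := norm_inner_le_norm (𝕜 := ℂ) f g
  rw [h1] at h2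
  have hf : ‖f‖ = Real.sqrt (∑ i, ‖a i‖ ^ 2) := PiLp.norm_eq_of_L2 f
  have hg : ‖g‖ = Real.sqrt (∑ i, ‖b i‖ ^ 2) := PiLp.norm_eq_of_L2 g
  rw [hf, hg] at h2; exact h2

lemma one_step {H : Type*} [NormedAddCommGroup H] [InnerProductSpace ℂ H] [CompleteSpace H]
    {d : ℕ} (A : Fin d → H →L[ℂ] H) (D : H →L[ℂ] H) (hDpos : D.IsPositive)
    (hDsq : D * D = 1 - ∑ i, adjoint (A i) * A i) (u v : H) :
    (inner ℂ u v : ℂ) = inner ℂ (D u) (D v) + ∑ i, (inner ℂ (A i u) (A i v) : ℂ) := by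
  have hD : adjoint D = D := hDpos.isSelfAdjoint.adjoint_eq
  have h1 : (inner ℂ (D u) (D v) : ℂ) = inner ℂ u ((D * D) v) := by
    rw [ContinuousLinearMap.mul_apply, ← adjoint_inner_right, hD]
  have h2 : ∑ i, (inner ℂ (A i u) (A i v) : ℂ) = inner ℂ u ((∑ i, adjoint (A i) * A i) v) := by
    rw [ContinuousLinearMap.sum_apply, inner_sum]
    refine Finset.sum_congr rfl fun i _ => ?_
    rw [ContinuousLinearMap.mul_apply, ← adjoint_inner_right]
  rw [h1, h2, ← inner_add_right, hDsq]
  simp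

lemma telescope {H : Type*} [NormedAddCommGroup H] [InnerProductSpace ℂ H] [CompleteSpace H]
    {d : ℕ} (A : Fin d → H →L[ℂ] H) (D : H →L[ℂ] H) (hDpos : D.IsPositive)
    (hDsq : D * D = 1 - ∑ i, adjoint (A i) * A i) :
    ∀ (N : ℕ) (u v : H), (inner ℂ u v : ℂ) =
      (∑ α : Fin N → Fin d, (inner ℂ (Aword A (List.ofFn α) u) (Aword A (List.ofFn α) v) : ℂ))
      + ∑ n ∈ Finset.range N, ∑ α : Fin n → Fin d,
          (inner ℂ (D (Aword A (List.ofFn α) u)) (D (Aword A (List.ofFn α) v)) : ℂ) := by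
  intro N
  induction N with
  | zero => intro u v; simp [Aword]
  | succ N ih =>
    intro u v
    rw [ih u v, Finset.sum_range_succ]
    have key : (∑ α : Fin (N+1) → Fin d,
        (inner ℂ (Aword A (List.ofFn α) u) (Aword A (List.ofFn α) v) : ℂ))
        = ∑ α : Fin N → Fin d, ∑ i : Fin d,
          (inner ℂ (A i (Aword A (List.ofFn α) u)) (A i (Aword A (List.ofFn α) v)) : ℂ) := by
      have he := Fintype.sum_equiv (Fin.consEquiv (fun _ : Fin (N+1) => Fin d))
        (fun p : Fin d × (Fin N → Fin d) =>
          (inner ℂ (A p.1 (Aword A (List.ofFn p.2) u)) (A p.1 (Aword A (List.ofFn p.2) v)) : ℂ))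
        (fun α : Fin (N+1) → Fin d =>
          (inner ℂ (Aword A (List.ofFn α) u) (Aword A (List.ofFn α) v) : ℂ))
        (fun p => by
          have : List.ofFn (Fin.cons p.1 p.2 : Fin (N+1) → Fin d) = p.1 :: List.ofFn p.2 := by
            simp [List.ofFn_succ]
          simp [Fin.consEquiv, this, Aword, ContinuousLinearMap.mul_apply])
      rw [← he, Fintype.sum_prod_type, Finset.sum_comm]
    rw [key]
    have step : ∀ α : Fin N → Fin d,
        ∑ i : Fin d, (inner ℂ (A i (Aword A (List.ofFn α) u)) (A i (Aword A (List.ofFn α) v)) : ℂ)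
        = inner ℂ (Aword A (List.ofFn α) u) (Aword A (List.ofFn α) v)
          - inner ℂ (D (Aword A (List.ofFn α) u)) (D (Aword A (List.ofFn α) v)) := by
      intro α
      rw [one_step A D hDpos hDsq (Aword A (List.ofFn α) u) (Aword A (List.ofFn α) v)]
      ring
    rw [Finset.sum_congr rfl (fun α _ => step α), Finset.sum_sub_distrib]
    ring

lemma reindexS {d N : ℕ} {M : Type*} [AddCommMonoid M] (S : Finset (List (Fin d)))
    (hSlen : ∀ w ∈ S, w.length < N) (f : List (Fin d) → M) :
    ∑ w ∈ S, f w = ∑ n ∈ Finset.range N,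
      ∑ α ∈ Finset.univ.filter (fun α : Fin n → Fin d => List.ofFn α ∈ S), f (List.ofFn α) := by
  rw [← Finset.sum_fiberwise_of_maps_to (g := List.length) (fun w hw => Finset.mem_range.2 (hSlen w hw)) f]
  refine Finset.sum_congr rfl fun n _ => ?_
  refine (Finset.sum_bij (fun (α : Fin n → Fin d) _ => List.ofFn α) ?_ ?_ ?_ ?_).symm
  · intro α hα
    simp only [Finset.mem_filter, Finset.mem_univ, true_and] at hα ⊢
    exact ⟨hα, List.length_ofFn (f := α)⟩
  · intro a _ b _ h; exact List.ofFn_injective h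
  · intro w hw
    simp only [Finset.mem_filter] at hw
    obtain ⟨hwS, hlen⟩ := hw
    subst hlen
    have hofn : List.ofFn (fun i => w.get (Fin.cast rfl i)) = w := by
      simp [List.ofFn_get w]
    refine ⟨fun i => w.get (Fin.cast rfl i), ?_, hofn⟩
    simp only [Finset.mem_filter, Finset.mem_univ, true_and, hofn]
    exact hwS
  · intros; rfl

/-- **Residual energy identity for prefix-closed truncations (Corollary 6.2).**
`S` is a prefix-closed set of words of length `< N`, `k_S` keeps the defect blocks
indexed by `S`, and `R_{N,S}` is the residual energy beyond `S` at depth `N`.  Then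
`k₀(x,x) - k_S(x,x) = R_{N,S}(x) ≥ 0` and
`|k₀(x,y) - k_S(x,y)| ≤ (R_{N,S}(x) R_{N,S}(y))^{1/2}`. -/
theorem prefix_closed_truncation_residual
    {H : Type*} [NormedAddCommGroup H] [InnerProductSpace ℂ H] [CompleteSpace H]
    {X : Type*} {d : ℕ} (A : Fin d → H →L[ℂ] H)
    (hA : ((1 : H →L[ℂ] H) - ∑ i, adjoint (A i) * A i).IsPositive)
    (D : H →L[ℂ] H) (hDpos : D.IsPositive)
    (hDsq : D * D = 1 - ∑ i, adjoint (A i) * A i)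
    (Φ : X → H) (N : ℕ) (hN : 1 ≤ N)
    (S : Finset (List (Fin d)))
    (hSlen : ∀ w ∈ S, w.length < N)
    (hSprefix : ∀ w ∈ S, w ≠ [] → w.tail ∈ S)
    (k₀ : X → X → ℂ) (hk₀ : ∀ x y, k₀ x y = inner ℂ (Φ x) (Φ y))
    (kS : X → X → ℂ)
    (hkS : ∀ x y, kS x y = ∑ w ∈ S,
      (inner ℂ (D (Aword A w (Φ x))) (D (Aword A w (Φ y))) : ℂ))
    (R : X → ℝ)
    (hR : ∀ x, R x = (∑ α : Fin N → Fin d, ‖Aword A (List.ofFn α) (Φ x)‖ ^ 2)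
      + ∑ n ∈ Finset.range N,
          ∑ α ∈ Finset.univ.filter (fun α : Fin n → Fin d => List.ofFn α ∉ S),
            ‖D (Aword A (List.ofFn α) (Φ x))‖ ^ 2) :
    (∀ x : X, k₀ x x - kS x x = (R x : ℂ) ∧ 0 ≤ R x)
    ∧ (∀ x y : X, ‖k₀ x y - kS x y‖ ≤ Real.sqrt (R x * R y)) := by
  classical
  set e : X → ((Fin N → Fin d) ⊕ ((n : Fin N) × (Fin (n : ℕ) → Fin d))) → H := fun x =>
    Sum.elim (fun α => Aword A (List.ofFn α) (Φ x))
      (fun p => if List.ofFn p.2 ∉ S then D (Aword A (List.ofFn p.2) (Φ x)) else 0)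
    with he
  -- the inr-part of sums
  have hinr : ∀ x y : X,
      (∑ p : (n : Fin N) × (Fin (n : ℕ) → Fin d), (inner ℂ (e x (Sum.inr p)) (e y (Sum.inr p)) : ℂ))
      = ∑ n ∈ Finset.range N,
          ∑ α ∈ Finset.univ.filter (fun α : Fin n → Fin d => List.ofFn α ∉ S),
            (inner ℂ (D (Aword A (List.ofFn α) (Φ x))) (D (Aword A (List.ofFn α) (Φ y))) : ℂ) := by
    intro x y
    rw [← Finset.univ_sigma_univ, Finset.sum_sigma,
      Finset.sum_range (fun n => ∑ α ∈ Finset.univ.filter (fun α : Fin n → Fin d => List.ofFn α ∉ S),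
        (inner ℂ (D (Aword A (List.ofFn α) (Φ x))) (D (Aword A (List.ofFn α) (Φ y))) : ℂ))]
    refine Finset.sum_congr rfl fun n _ => ?_
    rw [Finset.sum_filter]
    refine Finset.sum_congr rfl fun α _ => ?_
    by_cases h : List.ofFn α ∈ S <;> simp [he, h]
  have hinrN : ∀ x : X,
      (∑ p : (n : Fin N) × (Fin (n : ℕ) → Fin d), ‖e x (Sum.inr p)‖ ^ 2)
      = ∑ n ∈ Finset.range N,
          ∑ α ∈ Finset.univ.filter (fun α : Fin n → Fin d => List.ofFn α ∉ S),
            ‖D (Aword A (List.ofFn α) (Φ x))‖ ^ 2 := by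
    intro x
    rw [← Finset.univ_sigma_univ, Finset.sum_sigma,
      Finset.sum_range (fun n => ∑ α ∈ Finset.univ.filter (fun α : Fin n → Fin d => List.ofFn α ∉ S),
        ‖D (Aword A (List.ofFn α) (Φ x))‖ ^ 2)]
    refine Finset.sum_congr rfl fun n _ => ?_
    rw [Finset.sum_filter]
    refine Finset.sum_congr rfl fun α _ => ?_
    by_cases h : List.ofFn α ∈ S <;> simp [he, h]
  have key : ∀ x y : X, k₀ x y - kS x y = ∑ i, (inner ℂ (e x i) (e y i) : ℂ) := by
    intro x y
    rw [hk₀, hkS, telescope A D hDpos hDsq N (Φ x) (Φ y),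
      reindexS S hSlen (fun w => (inner ℂ (D (Aword A w (Φ x))) (D (Aword A w (Φ y))) : ℂ)),
      Fintype.sum_sum_type, hinr]
    have hsplit : ∀ n : ℕ,
        (∑ α : Fin n → Fin d,
          (inner ℂ (D (Aword A (List.ofFn α) (Φ x))) (D (Aword A (List.ofFn α) (Φ y))) : ℂ))
        = (∑ α ∈ Finset.univ.filter (fun α : Fin n → Fin d => List.ofFn α ∈ S),
            (inner ℂ (D (Aword A (List.ofFn α) (Φ x))) (D (Aword A (List.ofFn α) (Φ y))) : ℂ))
          + ∑ α ∈ Finset.univ.filter (fun α : Fin n → Fin d => List.ofFn α ∉ S),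
            (inner ℂ (D (Aword A (List.ofFn α) (Φ x))) (D (Aword A (List.ofFn α) (Φ y))) : ℂ) :=
      fun n => (Finset.sum_filter_add_sum_filter_not _ _ _).symm
    rw [Finset.sum_congr rfl (fun n _ => hsplit n), Finset.sum_add_distrib]
    have hl : (∑ α : Fin N → Fin d, (inner ℂ (e x (Sum.inl α)) (e y (Sum.inl α)) : ℂ))
        = ∑ α : Fin N → Fin d,
            (inner ℂ (Aword A (List.ofFn α) (Φ x)) (Aword A (List.ofFn α) (Φ y)) : ℂ) := by
      simp [he]
    rw [hl]
    ring
  have keyR : ∀ x : X, R x = ∑ i, ‖e x i‖ ^ 2 := by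
    intro x
    rw [hR, Fintype.sum_sum_type, hinrN]
    simp [he]
  have hRnn : ∀ x : X, 0 ≤ R x := fun x => by
    rw [keyR]; exact Finset.sum_nonneg fun i _ => sq_nonneg _
  refine ⟨fun x => ⟨?_, hRnn x⟩, fun x y => ?_⟩
  · rw [key x x, keyR x]
    push_cast
    exact Finset.sum_congr rfl fun i _ => inner_self_eq_norm_sq_to_K _
  · rw [key x y, Real.sqrt_mul (hRnn x)]
    calc ‖∑ i, (inner ℂ (e x i) (e y i) : ℂ)‖
        ≤ Real.sqrt (∑ i, ‖e x i‖ ^ 2) * Real.sqrt (∑ i, ‖e y i‖ ^ 2) := cs_finset _ _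
      _ = Real.sqrt (R x) * Real.sqrt (R y) := by rw [keyR x, keyR y]
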